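/- arXiv:1411.0947 — 2 statements merged into one kernel-verified Lean document; each statement's English description precedes it below -/
import Mathlib

section
/- Let I be a symmetric positive definite d×d real matrix written in block form I = [[G₁, G₂],[ᵗG₂, G₃]] with G₁ of size r×r (1 ≤ r ≤ d) and G₃ of size (d−r)×(d−r) (which is then symmetric positive definite, hence invertible), let H = [[0, 0],[0, G₃^{−1}]], and let I^{1/2} denote the symmetric positive definite square root of I. Then the matrix Q = I^{1/2} (I^{−1} − H) I^{1/2} is symmetric and idempotent (Q² = Q) and has trace equal to r; equivalently, Q is an orthogonal projection matrix of rank r. -/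
open Matrix

section

open scoped ComplexOrder

/-- The square root of a positive semidefinite matrix, as Mathlib (December 2024) defined it;
Mathlib no longer has `Matrix.PosSemidef.sqrt`. -/
noncomputable def Matrix.PosSemidef.sqrt {n 𝕜 : Type*} [Fintype n] [RCLike 𝕜] [DecidableEq n]
    {A : Matrix n n 𝕜} (hA : A.PosSemidef) : Matrix n n 𝕜 :=
  (hA.1.eigenvectorUnitary : Matrix n n 𝕜) * diagonal (((↑) : ℝ → 𝕜) ∘ Real.sqrt ∘ hA.1.eigenvalues) *
    (star hA.1.eigenvectorUnitary : Matrix n n 𝕜)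

end

lemma my_trace_fromBlocks {m n : Type*} [Fintype m] [Fintype n]
    (A : Matrix m m ℝ) (B : Matrix m n ℝ) (C : Matrix n m ℝ) (D : Matrix n n ℝ) :
    (fromBlocks A B C D).trace = A.trace + D.trace := by
  simp [Matrix.trace, Fintype.sum_sum_type, Matrix.diag]

/-- For a symmetric positive definite `d × d` matrix `I` in block form
`[[G₁, G₂], [ᵗG₂, G₃]]` (with `G₁` of size `r × r`, `1 ≤ r`), `H = [[0, 0], [0, G₃⁻¹]]`,
and `I^{1/2}` the positive semidefinite square root of `I`, the matrix
`Q = I^{1/2} (I⁻¹ - H) I^{1/2}` is symmetric, idempotent, and has trace `r`. -/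
theorem sqrt_quadratic_form_is_projection {r s : ℕ} (hr : 1 ≤ r)
    (G₁ : Matrix (Fin r) (Fin r) ℝ) (G₂ : Matrix (Fin r) (Fin s) ℝ)
    (G₃ : Matrix (Fin s) (Fin s) ℝ)
    (I : Matrix (Fin r ⊕ Fin s) (Fin r ⊕ Fin s) ℝ)
    (hI : I = Matrix.fromBlocks G₁ G₂ G₂ᵀ G₃)
    (hIpd : I.PosDef)
    (H : Matrix (Fin r ⊕ Fin s) (Fin r ⊕ Fin s) ℝ)
    (hH : H = Matrix.fromBlocks 0 0 0 G₃⁻¹)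
    (Q : Matrix (Fin r ⊕ Fin s) (Fin r ⊕ Fin s) ℝ)
    (hQ : Q = hIpd.posSemidef.sqrt * (I⁻¹ - H) * hIpd.posSemidef.sqrt) :
    Q.IsSymm ∧ Q * Q = Q ∧ Q.trace = (r : ℝ) := by
  set S := hIpd.posSemidef.sqrt with hS
  have hSS : S * S = I := by
    have hU := Unitary.coe_star_mul_self hIpd.posSemidef.1.eigenvectorUnitary
    conv_rhs => rw [hIpd.posSemidef.1.spectral_theorem, Unitary.conjStarAlgAut_apply]
    rw [hS, Matrix.PosSemidef.sqrt]
    simp only [mul_assoc]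
    rw [← mul_assoc (star _), hU,
      one_mul, ← mul_assoc (diagonal _), diagonal_mul_diagonal]
    congr 3
    funext i
    simp [Real.mul_self_sqrt (hIpd.posSemidef.eigenvalues_nonneg i)]
  have hSsymm : Sᵀ = S := by
    rw [← Matrix.conjTranspose_eq_transpose_of_trivial, hS, Matrix.PosSemidef.sqrt]
    simp [Matrix.conjTranspose_mul, Matrix.star_eq_conjTranspose, mul_assoc]
  have hIsymm : Iᵀ = I := hIpd.1
  -- G₃ is positive definite
  have hG₃herm : G₃ᵀ = G₃ := by
    have := congrArg Matrix.toBlocks₂₂ hIsymm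
    simpa [hI, Matrix.fromBlocks_transpose, Matrix.toBlocks_fromBlocks₂₂] using this
  have hG₃pd : G₃.PosDef := by
    refine Matrix.PosDef.of_dotProduct_mulVec_pos
      (by rw [Matrix.IsHermitian, Matrix.conjTranspose_eq_transpose_of_trivial]; exact hG₃herm) fun x hx => ?_
    have hne : (Sum.elim 0 x : Fin r ⊕ Fin s → ℝ) ≠ 0 := by
      intro h
      apply hx
      funext i
      exact congrFun h (Sum.inr i)
    have := hIpd.dotProduct_mulVec_pos hne
    simpa [hI, Matrix.fromBlocks_mulVec, Matrix.dotProduct_block] using this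
  have hG₃det : IsUnit G₃.det := hG₃pd.det_pos.ne'.isUnit
  have hIdet : IsUnit I.det := hIpd.det_pos.ne'.isUnit
  have hII : I * I⁻¹ = 1 := Matrix.mul_nonsing_inv I hIdet
  have hIIl : I⁻¹ * I = 1 := Matrix.nonsing_inv_mul I hIdet
  have hHIH : H * I * H = H := by
    rw [hH, hI]
    simp [Matrix.fromBlocks_multiply, Matrix.nonsing_inv_mul G₃ hG₃det,
      Matrix.nonsing_inv_mul_cancel_right]
  have hHsymm : Hᵀ = H := by
    rw [hH]
    simp [Matrix.fromBlocks_transpose, Matrix.transpose_nonsing_inv, hG₃herm]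
  have key : (I⁻¹ - H) * I * (I⁻¹ - H) = I⁻¹ - H := by
    have h1 : (I⁻¹ - H) * I = 1 - H * I := by rw [Matrix.sub_mul, hIIl]
    rw [h1, Matrix.sub_mul, Matrix.one_mul, Matrix.mul_sub, mul_assoc, hII, mul_one, hHIH]
    abel
  refine ⟨?_, ?_, ?_⟩
  · show Qᵀ = Q
    rw [hQ]
    rw [Matrix.transpose_mul, Matrix.transpose_mul, Matrix.transpose_sub,
      Matrix.transpose_nonsing_inv, hSsymm, hIsymm, hHsymm, mul_assoc]
  · rw [hQ]
    have h2 : S * (I⁻¹ - H) * S * (S * (I⁻¹ - H) * S)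
        = S * ((I⁻¹ - H) * (S * S) * (I⁻¹ - H)) * S := by
      noncomm_ring
    rw [h2, hSS, key]
  · rw [hQ, Matrix.trace_mul_cycle, hSS]
    have hIH : I * H = fromBlocks 0 (G₂ * G₃⁻¹) 0 1 := by
      rw [hI, hH]
      simp [Matrix.fromBlocks_multiply, Matrix.mul_nonsing_inv G₃ hG₃det]
    rw [Matrix.mul_sub, Matrix.trace_sub, hII, hIH, Matrix.trace_one, my_trace_fromBlocks]
    simp
end

section
/- Let Q be a d×d real symmetric idempotent matrix of rank r (1 ≤ r ≤ d), let M ≥ 1, and let (Z_1,…,Z_M) be an Md-dimensional centered Gaussian random vector whose d×d covariance blocks satisfy Cov(Z_i, Z_j) = ρ_{ij} · Id_{d×d} for a symmetric positive semidefinite M×M matrix (ρ_{ij}) with ρ_{ii} = 1. Then the joint law of the M-dimensional random vector (ᵗZ_1 Q Z_1, ᵗZ_2 Q Z_2, …, ᵗZ_M Q Z_M) equals the joint law of ( ∑_{h=1}^{r} ξ_{h;1}², …, ∑_{h=1}^{r} ξ_{h;M}² ), where (ξ_{h;i})_{1≤h≤r, 1≤i≤M} is a centered jointly Gaussian family with ξ_{h;i}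 ~ N(0,1) for all h, i, Cov(ξ_{h;i}, ξ_{l;j}) = 0 for h ≠ l, and Cov(ξ_{h;i}, ξ_{h;j}) = ρ_{ij} for all h. -/
open MeasureTheory Matrix Finset


lemma exists_onb_decomp (d r : ℕ) (Q : Matrix (Fin d) (Fin d) ℝ)
    (hQsymm : Q.IsSymm) (hQidem : Q * Q = Q) (hQrank : Q.rank = r) :
    ∃ u : Fin r → (Fin d → ℝ),
      (∀ h l, u h ⬝ᵥ u l = if h = l then 1 else 0) ∧
      (∀ z : Fin d → ℝ, z ⬝ᵥ Q.mulVec z = ∑ h, (u h ⬝ᵥ z) ^ 2) := by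
  have hherm : Q.IsHermitian := by
    rw [Matrix.IsHermitian, conjTranspose_eq_transpose_of_trivial]
    exact hQsymm
  set T := Matrix.toEuclideanLin Q with hT
  have hsym : T.IsSymmetric := Matrix.isHermitian_iff_isSymmetric.mp hherm
  have hTapp : ∀ x : EuclideanSpace ℝ (Fin d),
      T x = (WithLp.equiv 2 (Fin d → ℝ)).symm (Q *ᵥ (WithLp.equiv 2 (Fin d → ℝ)) x) :=
    fun x => Matrix.toEuclideanLin_apply Q x
  have hidem : ∀ x, T (T x) = T x := by
    intro x
    simp only [hTapp, Equiv.apply_symm_apply, Matrix.mulVec_mulVec, hQidem]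
  have hinner : ∀ v w : EuclideanSpace ℝ (Fin d),
      (inner ℝ v w : ℝ) = (WithLp.equiv 2 (Fin d → ℝ) v) ⬝ᵥ (WithLp.equiv 2 (Fin d → ℝ) w) := by
    intro v w
    simp [PiLp.inner_apply, RCLike.inner_apply, dotProduct, mul_comm]
  set K := LinearMap.range T with hK
  have hfr : Module.finrank ℝ K = r := by
    rw [← hQrank, Matrix.rank_eq_finrank_range_toLin Q
      (EuclideanSpace.basisFun (Fin d) ℝ).toBasis (EuclideanSpace.basisFun (Fin d) ℝ).toBasis,
      ← Matrix.toEuclideanLin_eq_toLin_orthonormal]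
  let b : OrthonormalBasis (Fin r) ℝ K :=
    (stdOrthonormalBasis ℝ K).reindex (finCongr hfr)
  refine ⟨fun h => (WithLp.equiv 2 (Fin d → ℝ)) ((b h : EuclideanSpace ℝ (Fin d))), ?_, ?_⟩
  · intro h l
    have hON := orthonormal_iff_ite.mp b.orthonormal h l
    rw [Submodule.coe_inner, hinner] at hON
    exact hON
  · intro z
    set x : EuclideanSpace ℝ (Fin d) := (WithLp.equiv 2 (Fin d → ℝ)).symm z with hx
    have hmem : T x ∈ K := LinearMap.mem_range_self T x
    set y : K := ⟨T x, hmem⟩ with hy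
    have hfix : ∀ w : K, T (w : EuclideanSpace ℝ (Fin d)) = (w : EuclideanSpace ℝ (Fin d)) := by
      rintro ⟨w, ⟨v, rfl⟩⟩
      exact hidem v
    have key : (inner ℝ x (T x) : ℝ)
        = ∑ h, (inner ℝ ((b h : K) : EuclideanSpace ℝ (Fin d)) x : ℝ) ^ 2 := by
      have h1 : (inner ℝ x (T x) : ℝ) = inner ℝ (T x) (T x) := by
        conv_lhs => rw [← hidem x]
        rw [← hsym x (T x)]
      have h2 : (inner ℝ y y : ℝ) = ∑ h, inner ℝ y (b h) * inner ℝ (b h) y :=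
        (b.sum_inner_mul_inner y y).symm
      have h3 : ∀ h : Fin r, (inner ℝ (b h) y : ℝ)
          = inner ℝ ((b h : K) : EuclideanSpace ℝ (Fin d)) x := by
        intro h
        have hh : (inner ℝ ((b h : K) : EuclideanSpace ℝ (Fin d)) (T x) : ℝ)
            = inner ℝ (T ((b h : K) : EuclideanSpace ℝ (Fin d))) x := (hsym _ _).symm
        rw [hfix] at hh
        rw [Submodule.coe_inner]
        exact hh
      calc (inner ℝ x (T x) : ℝ) = inner ℝ (T x) (T x) := h1
        _ = inner ℝ y y := (Submodule.coe_inner K y y).symm ▸ rfl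
        _ = ∑ h, inner ℝ y (b h) * inner ℝ (b h) y := h2
        _ = ∑ h, (inner ℝ ((b h : K) : EuclideanSpace ℝ (Fin d)) x : ℝ) ^ 2 := by
            refine Finset.sum_congr rfl fun h _ => ?_
            have e2 : (inner ℝ (b h) y : ℝ) = inner ℝ ((b h : K) : EuclideanSpace ℝ (Fin d)) x :=
              h3 h
            have e1 : (inner ℝ y (b h) : ℝ) = inner ℝ ((b h : K) : EuclideanSpace ℝ (Fin d)) x :=
              by rw [real_inner_comm]; exact e2
            rw [e1, e2, sq]
    have lhs_eq : z ⬝ᵥ Q.mulVec z = (inner ℝ x (T x) : ℝ) := by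
      rw [hinner, hTapp]
      simp [hx]
    rw [lhs_eq, key]
    refine Finset.sum_congr rfl fun h _ => ?_
    rw [hinner]
    simp [hx]

/-- Let `Q` be a `d × d` real symmetric idempotent matrix of rank `r`, and
let `(Z_1, …, Z_M)` be a centered `Md`-dimensional Gaussian vector (given by its law `μZ`,
characterized through its characteristic function) with covariance blocks
`Cov(Z_i, Z_j) = ρ i j • Id`, where `(ρ i j)` is symmetric positive semidefinite with unit
diagonal. Then the law of `(ᵗZ_1 Q Z_1, …, ᵗZ_M Q Z_M)` equals the law of
`(∑_{h<r} ξ_{h;1}², …, ∑_{h<r} ξ_{h;M}²)` for a centered jointly Gaussian family `ξ` with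
`ξ_{h;i} ~ N(0,1)`, `Cov(ξ_{h;i}, ξ_{l;j}) = 0` for `h ≠ l` and
`Cov(ξ_{h;i}, ξ_{h;j}) = ρ i j`. -/
theorem gaussian_quadratic_forms_law
    (d r M : ℕ) (hr1 : 1 ≤ r) (hrd : r ≤ d) (hM : 1 ≤ M)
    (Q : Matrix (Fin d) (Fin d) ℝ)
    (hQsymm : Q.IsSymm) (hQidem : Q * Q = Q) (hQrank : Q.rank = r)
    (ρ : Matrix (Fin M) (Fin M) ℝ)
    (hρpsd : ρ.PosSemidef) (hρdiag : ∀ i, ρ i i = 1)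
    (μZ : Measure (Fin M → Fin d → ℝ)) [IsProbabilityMeasure μZ]
    (hμZ : ∀ a : Fin M → Fin d → ℝ,
      ∫ z, Complex.exp (Complex.I * (∑ i, ∑ k, a i k * z i k : ℝ)) ∂μZ =
        Complex.exp (-(1 / 2 : ℂ) *
          ((∑ i, ∑ j, ρ i j * ∑ k, a i k * a j k : ℝ) : ℂ))) :
    ∃ μξ : Measure (Fin r → Fin M → ℝ), IsProbabilityMeasure μξ ∧
      (∀ a : Fin r → Fin M → ℝ,
        ∫ ξ, Complex.exp (Complex.I * (∑ h, ∑ i, a h i * ξ h i : ℝ)) ∂μξ =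
          Complex.exp (-(1 / 2 : ℂ) *
            ((∑ h, ∑ i, ∑ j, ρ i j * a h i * a h j : ℝ) : ℂ))) ∧
      Measure.map (fun z (i : Fin M) => z i ⬝ᵥ Q.mulVec (z i)) μZ =
        Measure.map (fun ξ (i : Fin M) => ∑ h, (ξ h i) ^ 2) μξ := by
  obtain ⟨u, hu_on, hu_qf⟩ := exists_onb_decomp d r Q hQsymm hQidem hQrank
  set L : (Fin M → Fin d → ℝ) → (Fin r → Fin M → ℝ) :=
    fun z h i => u h ⬝ᵥ z i with hLdef
  have hL : Measurable L := by
    apply measurable_pi_lambda; intro h; apply measurable_pi_lambda; intro i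
    simp only [hLdef, dotProduct]
    exact Finset.measurable_sum _ fun k _ =>
      measurable_const.mul ((measurable_pi_apply k).comp (measurable_pi_apply i))
  refine ⟨μZ.map L, Measure.isProbabilityMeasure_map hL.aemeasurable, ?_, ?_⟩
  · intro a
    set b : Fin M → Fin d → ℝ := fun i k => ∑ h, a h i * u h k with hbdef
    have hmeas : AEStronglyMeasurable
        (fun ξ : Fin r → Fin M → ℝ =>
          Complex.exp (Complex.I * (∑ h, ∑ i, a h i * ξ h i : ℝ))) (μZ.map L) := by
      apply Continuous.aestronglyMeasurable
      fun_prop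
    rw [integral_map hL.aemeasurable hmeas]
    have hpt : ∀ z : Fin M → Fin d → ℝ,
        (∑ h, ∑ i, a h i * L z h i) = ∑ i, ∑ k, b i k * z i k := by
      intro z
      calc ∑ h, ∑ i, a h i * L z h i
          = ∑ h, ∑ i, ∑ k, a h i * (u h k * z i k) := by
            simp only [hLdef, dotProduct, Finset.mul_sum]
        _ = ∑ i, ∑ h, ∑ k, a h i * (u h k * z i k) := Finset.sum_comm
        _ = ∑ i, ∑ k, ∑ h, a h i * (u h k * z i k) := by
            exact Finset.sum_congr rfl fun i _ => Finset.sum_comm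
        _ = ∑ i, ∑ k, b i k * z i k := by
            refine Finset.sum_congr rfl fun i _ => Finset.sum_congr rfl fun k _ => ?_
            simp only [hbdef, Finset.sum_mul]
            exact Finset.sum_congr rfl fun h _ => by ring
    simp_rw [hpt]
    rw [hμZ b]
    have hbb : ∀ i j, (∑ k, b i k * b j k) = ∑ h, a h i * a h j := by
      intro i j
      calc ∑ k, b i k * b j k
          = ∑ k, ∑ h, ∑ l, (a h i * u h k) * (a l j * u l k) := by
            refine Finset.sum_congr rfl fun k _ => ?_
            simp only [hbdef, Finset.sum_mul, Finset.mul_sum]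
            exact Finset.sum_comm
        _ = ∑ h, ∑ k, ∑ l, (a h i * u h k) * (a l j * u l k) := Finset.sum_comm
        _ = ∑ h, ∑ l, ∑ k, (a h i * u h k) * (a l j * u l k) :=
            Finset.sum_congr rfl fun h _ => Finset.sum_comm
        _ = ∑ h, ∑ l, (a h i * a l j) * (u h ⬝ᵥ u l) := by
            refine Finset.sum_congr rfl fun h _ => Finset.sum_congr rfl fun l _ => ?_
            simp only [dotProduct, Finset.mul_sum]
            exact Finset.sum_congr rfl fun k _ => by ring
        _ = ∑ h, a h i * a h j := by
            simp [hu_on, mul_ite, Finset.sum_ite_eq]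
    have hre : (∑ i, ∑ j, ρ i j * ∑ k, b i k * b j k)
        = ∑ h, ∑ i, ∑ j, ρ i j * a h i * a h j := by
      simp_rw [hbb]
      calc ∑ i, ∑ j, ρ i j * ∑ h, a h i * a h j
          = ∑ i, ∑ j, ∑ h, ρ i j * a h i * a h j := by
            refine Finset.sum_congr rfl fun i _ => Finset.sum_congr rfl fun j _ => ?_
            rw [Finset.mul_sum]
            exact Finset.sum_congr rfl fun h _ => by ring
        _ = ∑ i, ∑ h, ∑ j, ρ i j * a h i * a h j :=
            Finset.sum_congr rfl fun i _ => Finset.sum_comm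
        _ = ∑ h, ∑ i, ∑ j, ρ i j * a h i * a h j := Finset.sum_comm
    rw [hre]
  · have hg : Measurable (fun ξ : Fin r → Fin M → ℝ => fun i : Fin M => ∑ h, (ξ h i) ^ 2) := by
      apply measurable_pi_lambda; intro i
      exact Finset.measurable_sum _ fun h _ =>
        ((measurable_pi_apply i).comp (measurable_pi_apply h)).pow_const 2
    rw [Measure.map_map hg hL]
    congr 1
    funext z
    funext i
    rw [Function.comp_apply]
    exact hu_qf (z i)
end
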